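/- Let Y ~ Binomial(b, p) with b·p ≤ C·b/n for p ≤ C/n, let γ ∈ (0, min{1, n/(2Cb)}] with C > 1, b ≥ n, and let Z = Y - b/n. Then E[e^{±γZ}] ≤ 1 ± (p - 1/n)·b·γ + (5C²b/n)·b·γ²/n. -/
import Mathlib

set_option maxHeartbeats 1000000

lemma mgf_aux (b n : ℕ) (hn : 0 < n) (hb : n ≤ b) (C p γ s : ℝ)
    (hC : 1 < C) (hp0 : 0 ≤ p) (hpC : p ≤ C / n)
    (hγ0 : 0 < γ) (hγ1 : γ ≤ 1) (hγ2 : γ ≤ n / (2 * C * b))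
    (hs : s = γ ∨ s = -γ) :
    (1 - p + p * Real.exp s)^b * Real.exp (-(s * b / n)) ≤
      1 + (p - 1 / n) * b * s + (5 * C^2 * b / n) * b * γ^2 / n := by
  have hnR : (0:ℝ) < n := by exact_mod_cast hn
  have hbn : (n:ℝ) ≤ b := by exact_mod_cast hb
  have hbR : (0:ℝ) < b := lt_of_lt_of_le hnR hbn
  have hC0 : (0:ℝ) < C := by linarith
  have habs : |s| = γ := by
    rcases hs with h | h <;> subst h
    · exact abs_of_pos hγ0
    · rw [abs_neg]; exact abs_of_pos hγ0
  have hs2 : s^2 = γ^2 := by rcases hs with h | h <;> subst h <;> ring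
  have hsabs : |s| ≤ 1 := by rw [habs]; exact hγ1
  have hsl : -γ ≤ s := by rw [← habs]; exact neg_abs_le s
  have hsu : s ≤ γ := by rw [← habs]; exact le_abs_self s
  -- key size bound : 2*C*b*γ ≤ n
  have hkey : 2 * C * b * γ ≤ n := by
    have h2 : (0:ℝ) < 2 * C * b := by positivity
    have := (le_div_iff₀ h2).mp hγ2
    nlinarith
  have hpn : p * n ≤ C := (le_div_iff₀ hnR).mp hpC
  obtain ⟨X, hXdef⟩ : ∃ X : ℝ, X = C * b * γ / n := ⟨_, rfl⟩
  have hX0 : 0 ≤ X := by rw [hXdef]; positivity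
  have hXhalf : X ≤ 1/2 := by
    rw [hXdef, div_le_iff₀ hnR]; nlinarith
  have h1n : 1/(n:ℝ) ≤ C/n := by gcongr
  have h1n0 : (0:ℝ) < 1/n := by positivity
  have hq : |p - 1/n| ≤ C/n := by
    rw [abs_le]; constructor <;> linarith
  -- the base is bounded by an exponential
  have h1 : 1 - p + p * Real.exp s ≤ Real.exp (p * (Real.exp s - 1)) := by
    have := Real.add_one_le_exp (p * (Real.exp s - 1)); linarith
  have e1 : p * n * γ ≤ C * γ := mul_le_mul_of_nonneg_right hpn hγ0.le
  have e2 : (p * n * γ) * (2*b) ≤ (C*γ)*(2*b) :=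
    mul_le_mul_of_nonneg_right e1 (by positivity)
  have hn1 : (1:ℝ) ≤ n := by exact_mod_cast hn
  have hb1 : (1:ℝ) ≤ b := hn1.trans hbn
  have hpγ : p * γ ≤ 1 := by
    nlinarith [mul_pos hbR hnR, mul_nonneg hnR.le (by linarith : (0:ℝ) ≤ (b:ℝ) - 1)]
  have hbase0 : 0 ≤ 1 - p + p * Real.exp s := by
    have he : 1 + s ≤ Real.exp s := by linarith [Real.add_one_le_exp s]
    have hps : p * (1 + s) ≤ p * Real.exp s := mul_le_mul_of_nonneg_left he hp0
    nlinarith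
  have h2 : (1 - p + p * Real.exp s)^b ≤ Real.exp (b * (p * (Real.exp s - 1))) := by
    calc (1 - p + p * Real.exp s)^b ≤ (Real.exp (p * (Real.exp s - 1)))^b :=
          pow_le_pow_left₀ hbase0 h1 b
      _ = Real.exp (b * (p * (Real.exp s - 1))) := (Real.exp_nat_mul _ b).symm
  have h3 : (1 - p + p * Real.exp s)^b * Real.exp (-(s * b / n)) ≤
      Real.exp (b * (p * (Real.exp s - 1)) - s * b / n) := by
    calc (1 - p + p * Real.exp s)^b * Real.exp (-(s * b / n))
        ≤ Real.exp (b * (p * (Real.exp s - 1))) * Real.exp (-(s * b / n)) :=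
          mul_le_mul_of_nonneg_right h2 (Real.exp_pos _).le
      _ = Real.exp (b * (p * (Real.exp s - 1)) - s * b / n) := by
          rw [← Real.exp_add, ← sub_eq_add_neg]
  -- Taylor bound for exp s
  have hexp_ub : Real.exp s ≤ 1 + s + γ^2 := by
    have h := (abs_le.mp (Real.abs_exp_sub_one_sub_id_le hsabs)).2
    rw [hs2] at h; linarith
  -- exponent bound
  obtain ⟨v, hvdef⟩ : ∃ v : ℝ, v = (p - 1/n) * b * s + p * b * γ^2 := ⟨_, rfl⟩
  have hE : b * (p * (Real.exp s - 1)) - s * b / n ≤ v := by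
    have hbp : (0:ℝ) ≤ (b:ℝ) * p := by positivity
    have hmono := mul_le_mul_of_nonneg_left
      (by linarith : Real.exp s - 1 ≤ s + γ^2) hbp
    have hid : (p - 1/n) * (b:ℝ) * s + p * b * γ^2
        = b * (p * (s + γ^2)) - s * b / n := by field_simp; ring
    rw [hvdef, hid]; linarith
  -- |v| ≤ 2X ≤ 1
  have hv1 : |(p - 1/n) * b * s| ≤ X := by
    rw [abs_mul, abs_mul, habs, Nat.abs_cast, hXdef]
    calc |p - 1/n| * (b:ℝ) * γ ≤ (C/n) * b * γ :=
          mul_le_mul_of_nonneg_right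
            (mul_le_mul_of_nonneg_right hq hbR.le) hγ0.le
      _ = C * b * γ / n := by ring
  have hv2 : p * b * γ^2 ≤ X := by
    rw [hXdef]
    have step1 : p * b * γ^2 ≤ (C/n) * b * γ^2 :=
      mul_le_mul_of_nonneg_right
        (mul_le_mul_of_nonneg_right hpC hbR.le) (sq_nonneg γ)
    have step2 : (C/n) * b * γ^2 ≤ (C/n) * b * γ := by
      have hg : γ^2 ≤ γ := by nlinarith
      have h := mul_le_mul_of_nonneg_left hg (by positivity : (0:ℝ) ≤ (C/n)*(b:ℝ))
      nlinarith [h]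
    calc p * (b:ℝ) * γ^2 ≤ (C/n) * b * γ := step1.trans step2
      _ = C * b * γ / n := by ring
  have hv2' : 0 ≤ p * b * γ^2 := by positivity
  have hvabs : |v| ≤ 2 * X := by
    rw [hvdef]
    calc |(p - 1/n) * b * s + p * b * γ^2|
        ≤ |(p - 1/n) * b * s| + |p * b * γ^2| := abs_add_le _ _
      _ ≤ X + X := by rw [abs_of_nonneg hv2']; exact add_le_add hv1 hv2
      _ = 2 * X := by ring
  have hvabs1 : |v| ≤ 1 := hvabs.trans (by linarith)
  have h4 : Real.exp v ≤ 1 + v + v^2 := by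
    have h := (abs_le.mp (Real.abs_exp_sub_one_sub_id_le hvabs1)).2
    linarith
  -- final bound
  have hvsq : v^2 ≤ 4 * X^2 := by
    have h := abs_le.mp hvabs
    nlinarith [h.1, h.2]
  have hCbn : (n:ℝ) ≤ C * b := by nlinarith
  have hXsq : p * b * γ^2 ≤ X^2 := by
    rw [hXdef, div_pow, le_div_iff₀ (by positivity : (0:ℝ) < ((n:ℝ))^2)]
    nlinarith [mul_le_mul_of_nonneg_right hpn
        (by positivity : (0:ℝ) ≤ (b:ℝ)*γ^2*n),
      mul_le_mul_of_nonneg_right hCbn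
        (by positivity : (0:ℝ) ≤ C*(b:ℝ)*γ^2)]
  have hfin : 1 + v + v^2 ≤ 1 + (p - 1/n) * b * s + (5 * C^2 * b / n) * b * γ^2 / n := by
    have hRX : (5 * C^2 * b / n) * (b:ℝ) * γ^2 / n = 5 * X^2 := by
      rw [hXdef]; ring
    rw [hRX]
    linarith [hvdef.le, hvdef.ge, hvsq, hXsq]
  calc (1 - p + p * Real.exp s)^b * Real.exp (-(s * b / n)) ≤
        Real.exp (b * (p * (Real.exp s - 1)) - s * b / n) := h3
    _ ≤ Real.exp v := Real.exp_le_exp.mpr hE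
    _ ≤ 1 + v + v^2 := h4
    _ ≤ _ := hfin

/-- MGF bound for the batched setting. If Y ~ Binomial(b, p) and
Z = Y - b/n, then E[e^{±γZ}] = (1 - p + p·e^{±γ})^b · e^{∓γb/n} is bounded by
1 ± (p - 1/n)·b·γ + (5C²b/n)·b·γ²/n, for p ≤ C/n, b ≥ n and γ ≤ min{1, n/(2Cb)}. -/
theorem batched_mgf_bound
    (b n : ℕ) (hn : 0 < n) (hb : n ≤ b) (C p γ : ℝ)
    (hC : 1 < C) (hp0 : 0 ≤ p) (hpC : p ≤ C / n)
    (hγ0 : 0 < γ) (hγ1 : γ ≤ 1) (hγ2 : γ ≤ n / (2 * C * b)) :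
    ((1 - p + p * Real.exp γ)^b * Real.exp (-(γ * b / n)) ≤
      1 + (p - 1 / n) * b * γ + (5 * C^2 * b / n) * b * γ^2 / n) ∧
    ((1 - p + p * Real.exp (-γ))^b * Real.exp (γ * b / n) ≤
      1 - (p - 1 / n) * b * γ + (5 * C^2 * b / n) * b * γ^2 / n) := by
  constructor
  · exact mgf_aux b n hn hb C p γ γ hC hp0 hpC hγ0 hγ1 hγ2 (Or.inl rfl)
  · have h := mgf_aux b n hn hb C p γ (-γ) hC hp0 hpC hγ0 hγ1 hγ2 (Or.inr rfl)
    have e1 : -((-γ) * (b:ℝ) / n) = γ * b / n := by ring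
    rw [e1] at h
    exact h.trans (le_of_eq (by ring))
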